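/- The reparameterized Altes chirplet frequency response U is an admissible wavelet: U is square integrable over ℝ (∫_ℝ |U(ω)|² dω < ∞), and its admissibility integral is finite (∫_ℝ |U(ω)|²/|ω| dω < ∞). -/

import Mathlib

open MeasureTheory

/-- The reparameterized Altes chirplet frequency response. -/
noncomputable def altes (κ ω₀ lam : ℝ) : ℝ → ℂ := fun ω =>
  if 0 < ω then
    Complex.exp (-(↑(κ * (Real.log (ω / ω₀)) ^ 2) : ℂ)) *
      Complex.exp (2 * Real.pi * Complex.I * Real.log ω / Real.log lam)
  else 0

lemma gaussian_shift (c a : ℝ) (hc : 0 < c) :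
    Integrable (fun t : ℝ => Real.exp (-(c * (t - a) ^ 2))) := by
  have := (integrable_exp_neg_mul_sq hc).comp_sub_right a
  simpa [neg_mul] using this

lemma gaussian_exp_mul (c a : ℝ) (hc : 0 < c) :
    Integrable (fun t : ℝ => Real.exp t * Real.exp (-(c * (t - a) ^ 2))) := by
  have h := (gaussian_shift c (a + 1/(2*c)) hc).const_mul (Real.exp (a + 1/(4*c)))
  refine h.congr ?_
  filter_upwards with t
  rw [← Real.exp_add, ← Real.exp_add]
  congr 1
  field_simp
  ring

lemma norm_altes_sq (κ ω₀ lam : ℝ) (hω₀ : 0 < ω₀) {ω : ℝ} (hω : 0 < ω) :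
    ‖altes κ ω₀ lam ω‖ ^ 2 = Real.exp (-(2 * κ * (Real.log ω - Real.log ω₀) ^ 2)) := by
  rw [altes, if_pos hω, norm_mul,
    Complex.norm_exp, Complex.norm_exp]
  have h1 : (-(↑(κ * (Real.log (ω / ω₀)) ^ 2) : ℂ)).re = -(κ * (Real.log (ω / ω₀)) ^ 2) := by
    rw [Complex.neg_re, Complex.ofReal_re]
  have h2 : ((2 : ℂ) * Real.pi * Complex.I * Real.log ω / Real.log lam).re = 0 := by
    simp [Complex.div_re, Complex.mul_re, Complex.mul_im]
  rw [h1, h2, Real.exp_zero, mul_one, ← Real.exp_nat_mul,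
    Real.log_div (ne_of_gt hω) (ne_of_gt hω₀)]
  push_cast
  ring_nf

lemma integrableOn_Ioi_iff_comp_exp (g : ℝ → ℝ) :
    IntegrableOn g (Set.Ioi (0:ℝ)) ↔
      Integrable (fun t => Real.exp t * g (Real.exp t)) := by
  rw [← Real.range_exp, ← Set.image_univ,
    integrableOn_image_iff_integrableOn_abs_deriv_smul MeasurableSet.univ
      (fun x _ => (Real.hasDerivAt_exp x).hasDerivWithinAt)
      (Real.exp_injective.injOn), integrableOn_univ]
  simp only [smul_eq_mul, abs_of_pos (Real.exp_pos _)]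

/-- The Altes chirplet is an admissible wavelet: it is square
integrable over ℝ and its admissibility integral is finite. -/
theorem altes_admissible (κ ω₀ lam : ℝ) (hκ : 0 < κ) (hω₀ : 0 < ω₀)
    (hlam : 0 < lam) (hlam1 : lam ≠ 1) :
    Integrable (fun ω : ℝ => ‖altes κ ω₀ lam ω‖ ^ 2) ∧
      Integrable (fun ω : ℝ => ‖altes κ ω₀ lam ω‖ ^ 2 / |ω|) := by
  set a := Real.log ω₀ with ha
  set g : ℝ → ℝ := fun ω => Real.exp (-(2 * κ * (Real.log ω - a) ^ 2)) with hg
  have h2κ : (0:ℝ) < 2 * κ := by positivity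
  have hval : ∀ {ω : ℝ}, 0 < ω → ‖altes κ ω₀ lam ω‖ ^ 2 = g ω := fun hω =>
    norm_altes_sq κ ω₀ lam hω₀ hω
  have hzero : ∀ {ω : ℝ}, ¬ 0 < ω → ‖altes κ ω₀ lam ω‖ ^ 2 = 0 := by
    intro ω hω; simp [altes, if_neg hω]
  constructor
  · have : (fun ω : ℝ => ‖altes κ ω₀ lam ω‖ ^ 2) =
        Set.indicator (Set.Ioi 0) g := by
      funext ω
      by_cases hω : 0 < ω
      · rw [Set.indicator_of_mem (Set.mem_Ioi.mpr hω), hval hω]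
      · rw [Set.indicator_of_notMem (by simpa using hω), hzero hω]
    rw [this, integrable_indicator_iff measurableSet_Ioi,
      integrableOn_Ioi_iff_comp_exp]
    simp only [hg, Real.log_exp]
    exact gaussian_exp_mul (2 * κ) a h2κ
  · have : (fun ω : ℝ => ‖altes κ ω₀ lam ω‖ ^ 2 / |ω|) =
        Set.indicator (Set.Ioi 0) (fun ω => g ω / |ω|) := by
      funext ω
      by_cases hω : 0 < ω
      · rw [Set.indicator_of_mem (Set.mem_Ioi.mpr hω), hval hω]
      · rw [Set.indicator_of_notMem (by simpa using hω), hzero hω, zero_div]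
    rw [this, integrable_indicator_iff measurableSet_Ioi,
      integrableOn_Ioi_iff_comp_exp]
    have : (fun t : ℝ => Real.exp t * (g (Real.exp t) / |Real.exp t|)) =
        fun t : ℝ => Real.exp (-(2 * κ * (t - a) ^ 2)) := by
      funext t
      simp only [hg]
      rw [Real.log_exp, abs_of_pos (Real.exp_pos t), mul_div_cancel₀ _ (Real.exp_ne_zero t)]
    rw [this]
    exact gaussian_shift (2 * κ) a h2κ
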